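/- For an exponentially distributed real random variable ξ with mean μ > 0 and constants a ≥ 0, b > 0, the expectation E[log₂(a + bξ)] satisfies log₂(a + bμ) − γ·log₂(e) ≤ E[log₂(a + bξ)] ≤ log₂(a + bμ), where γ is the Euler–Mascheroni constant. -/

import Mathlib

open scoped ENNReal NNReal
open MeasureTheory ProbabilityTheory Real Set

lemma integral_log_mul_exp_neg :
    ∫ t in Ioi (0:ℝ), Real.log t * Real.exp (-t) = -Real.eulerMascheroniConstant := by
  set I : ℝ := ∫ t in Ioi (0:ℝ), Real.log t * Real.exp (-t) with hI
  have h1 : HasDerivAt Complex.GammaIntegral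
      (∫ t : ℝ in Ioi 0, (t:ℂ) ^ ((1:ℂ) - 1) * (Real.log t * Real.exp (-t))) 1 :=
    Complex.hasDerivAt_GammaIntegral (by norm_num)
  have h2 : (∫ t : ℝ in Ioi 0, (t:ℂ) ^ ((1:ℂ) - 1) * (Real.log t * Real.exp (-t))) = (I : ℂ) := by
    rw [hI]
    have step : (∫ t : ℝ in Ioi 0, (t:ℂ) ^ ((1:ℂ) - 1) * (Real.log t * Real.exp (-t)))
        = ∫ t : ℝ in Ioi 0, ((Real.log t * Real.exp (-t) : ℝ) : ℂ) := by
      refine setIntegral_congr_fun measurableSet_Ioi (fun t ht => ?_)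
      push_cast
      rw [sub_self, Complex.cpow_zero, one_mul]
    rw [step]
    exact integral_ofReal
  rw [h2] at h1
  -- GammaIntegral = Gamma near 1
  have h3 : HasDerivAt Complex.Gamma (I : ℂ) 1 := by
    refine h1.congr_of_eventuallyEq ?_
    have : {s : ℂ | 0 < s.re} ∈ nhds (1:ℂ) := by
      refine IsOpen.mem_nhds ?_ (by norm_num)
      exact isOpen_lt continuous_const Complex.continuous_re
    filter_upwards [this] with s hs
    exact (Complex.Gamma_eq_integral hs)
  have h4 : HasDerivAt (fun x : ℝ => (Complex.Gamma x).re) (I : ℂ).re 1 :=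
    h3.real_of_complex
  have h5 : HasDerivAt Real.Gamma I 1 := by
    simpa [Complex.Gamma_ofReal] using h4
  have := Real.hasDerivAt_Gamma_one
  have := h5.unique this
  linarith

lemma expMeasure_eq (r : ℝ) :
    expMeasure r = (volume : Measure ℝ).withDensity
      (fun x => ((Real.toNNReal (exponentialPDFReal r x) : ℝ≥0) : ℝ≥0∞)) := by
  rfl

lemma exp_integral_eq {r : ℝ} (hr : 0 < r) (g : ℝ → ℝ) :
    ∫ x, g x ∂(expMeasure r) = ∫ x in Ioi 0, r * Real.exp (-(r * x)) * g x := by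
  rw [expMeasure_eq r, integral_withDensity_eq_integral_smul
    (measurable_exponentialPDFReal r).real_toNNReal g]
  have h0 : ∀ x : ℝ, (Real.toNNReal (exponentialPDFReal r x) : ℝ≥0) • g x
      = exponentialPDFReal r x * g x := by
    intro x
    rw [NNReal.smul_def, smul_eq_mul, Real.coe_toNNReal _ (exponentialPDFReal_nonneg hr x)]
  simp_rw [h0]
  rw [← integral_indicator measurableSet_Ioi]
  refine integral_congr_ae ?_
  filter_upwards [compl_mem_ae_iff.2 (volume_singleton (a := (0:ℝ)))] with x hx
  rcases lt_trichotomy x 0 with h | h | h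
  · simp [indicator_of_notMem (notMem_Ioi.2 h.le), exponentialPDFReal, gammaPDFReal,
      not_le.2 h]
  · exact absurd h hx
  · rw [indicator_of_mem (mem_Ioi.2 h)]
    simp [exponentialPDFReal, gammaPDFReal, h.le]

-- standard rate-1 facts
lemma J1 : IntegrableOn (fun t : ℝ => Real.exp (-t) * t) (Ioi 0) := by
  have := Real.GammaIntegral_convergent (s := 2) (by norm_num)
  refine this.congr_fun (fun t ht => ?_) measurableSet_Ioi
  norm_num

lemma S1 : ∫ t in Ioi (0:ℝ), Real.exp (-t) * t = 1 := by
  have h := Real.Gamma_eq_integral (s := 2) (by norm_num)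
  have h2 : Real.Gamma 2 = 1 := by
    rw [show (2:ℝ) = 1 + 1 by norm_num, Real.Gamma_add_one one_ne_zero, Real.Gamma_one, mul_one]
  rw [h2] at h
  refine Eq.trans ?_ h.symm
  refine setIntegral_congr_fun measurableSet_Ioi (fun t ht => ?_)
  norm_num

lemma abs_log_le (t : ℝ) (ht : 0 < t) : |Real.log t| ≤ 2 * t ^ (-(1/2) : ℝ) + t := by
  rcases le_or_gt 1 t with h | h
  · rw [abs_of_nonneg (Real.log_nonneg h)]
    have h1 : Real.log t ≤ t - 1 := Real.log_le_sub_one_of_pos ht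
    have h2 : (0:ℝ) ≤ 2 * t ^ (-(1/2) : ℝ) := by positivity
    linarith
  · rw [abs_of_nonpos (Real.log_nonpos ht.le h.le)]
    have h1 : Real.log (t ^ (-(1/2) : ℝ)) ≤ t ^ (-(1/2) : ℝ) - 1 :=
      Real.log_le_sub_one_of_pos (by positivity)
    rw [Real.log_rpow ht] at h1
    nlinarith [ht.le, Real.rpow_nonneg ht.le (-(1/2) : ℝ)]

lemma J2 : IntegrableOn (fun t : ℝ => Real.log t * Real.exp (-t)) (Ioi 0) := by
  have hg : IntegrableOn (fun t : ℝ => 2 * (Real.exp (-t) * t ^ ((1:ℝ)/2 - 1)) + Real.exp (-t) * t)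
      (Ioi 0) :=
    ((Real.GammaIntegral_convergent (by norm_num)).const_mul 2).add J1
  refine Integrable.mono' hg ?_ ?_
  · exact (Real.measurable_log.mul (by fun_prop)).aestronglyMeasurable
  · rw [ae_restrict_iff' measurableSet_Ioi]
    refine ae_of_all _ (fun t ht => ?_)
    have ht0 : (0:ℝ) < t := ht
    have h1 : |Real.log t| ≤ 2 * t ^ (-(1/2) : ℝ) + t := abs_log_le t ht0
    have he : 0 < Real.exp (-t) := Real.exp_pos _
    rw [norm_mul, Real.norm_eq_abs, Real.norm_eq_abs, abs_of_pos he]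
    have : ((1:ℝ)/2 - 1) = (-(1/2) : ℝ) := by norm_num
    rw [this]
    nlinarith [Real.rpow_nonneg ht0.le (-(1/2) : ℝ), h1, he.le, ht0.le]

variable {r : ℝ}

lemma Ir0 (hr : 0 < r) : ∫ x in Ioi (0:ℝ), r * Real.exp (-(r * x)) = 1 := by
  rw [integral_const_mul]
  have h := integral_comp_mul_left_Ioi (fun u : ℝ => Real.exp (-u)) 0 hr
  rw [mul_zero] at h
  rw [h, integral_exp_neg_Ioi_zero, smul_eq_mul, mul_one, mul_inv_cancel₀ hr.ne']

lemma Ir1 (hr : 0 < r) : ∫ x in Ioi (0:ℝ), r * Real.exp (-(r * x)) * x = 1 / r := by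
  have h := integral_comp_mul_left_Ioi (fun u : ℝ => Real.exp (-u) * u) 0 hr
  rw [mul_zero, S1, smul_eq_mul, mul_one] at h
  rw [show (fun x : ℝ => r * Real.exp (-(r * x)) * x)
      = fun x : ℝ => Real.exp (-(r * x)) * (r * x) by funext x; ring] at *
  rw [h, one_div]

lemma Ir2 (hr : 0 < r) : ∫ x in Ioi (0:ℝ), r * Real.exp (-(r * x)) * Real.log x
    = -Real.eulerMascheroniConstant - Real.log r := by
  have hstd : ∫ u in Ioi (0:ℝ), Real.exp (-u) * (Real.log u - Real.log r)
      = -Real.eulerMascheroniConstant - Real.log r := by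
    have h1 : ∫ u in Ioi (0:ℝ), (Real.log u * Real.exp (-u) - Real.log r * Real.exp (-u))
        = -Real.eulerMascheroniConstant - Real.log r := by
      rw [integral_sub J2 ((exp_neg_integrableOn_Ioi 0 one_pos).congr_fun
          (fun x _ => by norm_num) measurableSet_Ioi |>.const_mul _),
        integral_log_mul_exp_neg, integral_const_mul]
      have : ∫ u in Ioi (0:ℝ), Real.exp (-u) = 1 := integral_exp_neg_Ioi_zero
      rw [this, mul_one]
    refine Eq.trans ?_ h1
    refine setIntegral_congr_fun measurableSet_Ioi (fun u hu => by ring)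
  have h := integral_comp_mul_left_Ioi (fun u : ℝ => Real.exp (-u) * (Real.log u - Real.log r)) 0 hr
  rw [mul_zero, hstd, smul_eq_mul] at h
  have h2 : ∫ x in Ioi (0:ℝ), Real.exp (-(r * x)) * (Real.log (r * x) - Real.log r)
      = ∫ x in Ioi (0:ℝ), Real.exp (-(r * x)) * Real.log x := by
    refine setIntegral_congr_fun measurableSet_Ioi (fun x hx => ?_)
    rw [Real.log_mul hr.ne' (ne_of_gt hx)]
    ring_nf
  rw [h2] at h
  rw [show (fun x : ℝ => r * Real.exp (-(r * x)) * Real.log x)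
      = fun x : ℝ => r * (Real.exp (-(r * x)) * Real.log x) by funext x; ring]
  rw [integral_const_mul, h]
  field_simp

lemma Kr1 (hr : 0 < r) : IntegrableOn (fun x : ℝ => r * Real.exp (-(r * x)) * x) (Ioi 0) := by
  have h := (integrableOn_Ioi_comp_mul_left_iff (fun u : ℝ => Real.exp (-u) * u) 0 hr).2
    (by rw [mul_zero]; exact J1)
  refine h.congr_fun (fun x hx => by ring) measurableSet_Ioi

lemma Kr2 (hr : 0 < r) :
    IntegrableOn (fun x : ℝ => r * Real.exp (-(r * x)) * Real.log x) (Ioi 0) := by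
  have h := (integrableOn_Ioi_comp_mul_left_iff
      (fun u : ℝ => Real.log u * Real.exp (-u)) 0 hr).2 (by rw [mul_zero]; exact J2)
  have hexp : IntegrableOn (fun x : ℝ => Real.exp (-(r * x))) (Ioi 0) :=
    (exp_neg_integrableOn_Ioi 0 hr).congr_fun (fun x _ => by simp only [neg_mul]) measurableSet_Ioi
  have h2 : IntegrableOn
      (fun x : ℝ => Real.log (r * x) * Real.exp (-(r * x)) - Real.log r * Real.exp (-(r * x)))
      (Ioi 0) := h.sub (hexp.const_mul _)
  refine IntegrableOn.congr_fun (h2.const_mul r) (fun x hx => ?_) measurableSet_Ioi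
  rw [Real.log_mul hr.ne' (ne_of_gt hx)]
  ring

lemma exp_ae_Ioi (hr : 0 < r) : ∀ᵐ x ∂(expMeasure r), x ∈ Ioi (0:ℝ) := by
  rw [ae_iff]
  have hs : {x : ℝ | x ∉ Ioi (0:ℝ)} = Iic 0 := by ext x; simp
  rw [hs]
  have hsplit : (Iic (0:ℝ)) = Iio 0 ∪ {0} := by
    ext x; simp [le_iff_lt_or_eq]
  rw [hsplit]
  refine le_antisymm (le_trans (measure_union_le _ _) ?_) zero_le
  have h1 : expMeasure r (Iio 0) = 0 := by
    rw [expMeasure_eq, withDensity_apply _ measurableSet_Iio]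
    exact lintegral_exponentialPDF_of_nonpos le_rfl
  have h2 : expMeasure r {(0:ℝ)} = 0 := by
    rw [expMeasure_eq]
    exact withDensity_absolutelyContinuous _ _ (volume_singleton)
  rw [h1, h2, add_zero]

lemma exp_integrable (hr : 0 < r) {g : ℝ → ℝ}
    (hi : IntegrableOn (fun x => r * Real.exp (-(r * x)) * g x) (Ioi 0)) :
    Integrable g (expMeasure r) := by
  have hm : Measurable (exponentialPDF r) := (measurable_exponentialPDFReal r).ennreal_ofReal
  rw [show expMeasure r = volume.withDensity (exponentialPDF r) from rfl,
    integrable_withDensity_iff hm (ae_of_all _ (fun x => ENNReal.ofReal_lt_top))]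
  refine (hi.integrable_indicator measurableSet_Ioi).congr ?_
  filter_upwards [compl_mem_ae_iff.2 (volume_singleton (a := (0:ℝ)))] with x hx
  rcases lt_trichotomy x 0 with h | h | h
  · rw [indicator_of_notMem (notMem_Ioi.2 h.le)]
    simp [exponentialPDF_eq, not_le.2 h]
  · exact absurd h hx
  · rw [indicator_of_mem (mem_Ioi.2 h), exponentialPDF_of_nonneg h.le,
      ENNReal.toReal_ofReal (by positivity)]
    ring

lemma abs_log_affine_le {a b x : ℝ} (ha : 0 ≤ a) (hb : 0 < b) (hx : 0 < x) :
    |Real.log (a + b * x)| ≤ |Real.log b + Real.log x| + (a + b * x) := by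
  have hpos : 0 < a + b * x := by positivity
  have hub : Real.log (a + b * x) ≤ a + b * x :=
    (Real.log_le_sub_one_of_pos hpos).trans (by linarith)
  have hlb : Real.log b + Real.log x ≤ Real.log (a + b * x) := by
    rw [← Real.log_mul hb.ne' hx.ne']
    exact Real.log_le_log (by positivity) (by linarith)
  rw [abs_le]
  constructor
  · have := neg_abs_le (Real.log b + Real.log x)
    linarith
  · have : (0:ℝ) ≤ |Real.log b + Real.log x| := abs_nonneg _
    linarith

lemma integrableOn_log_affine (hr : 0 < r) {a b : ℝ} (ha : 0 ≤ a) (hb : 0 < b) :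
    IntegrableOn (fun x : ℝ => r * Real.exp (-(r * x)) * Real.log (a + b * x)) (Ioi 0) := by
  have E0 : IntegrableOn (fun x : ℝ => Real.exp (-(r * x))) (Ioi 0) :=
    (exp_neg_integrableOn_Ioi 0 hr).congr_fun (fun x _ => by simp only [neg_mul]) measurableSet_Ioi
  have h1 : IntegrableOn (fun x : ℝ => r * Real.exp (-(r * x)) * (Real.log b + Real.log x))
      (Ioi 0) := by
    refine IntegrableOn.congr_fun ((Kr2 hr).add (E0.const_mul (r * Real.log b)))
      (fun x hx => by simp only [Pi.add_apply]; ring) measurableSet_Ioi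
  have h2 : IntegrableOn (fun x : ℝ => r * Real.exp (-(r * x)) * (a + b * x)) (Ioi 0) := by
    refine IntegrableOn.congr_fun ((E0.const_mul (r * a)).add ((Kr1 hr).const_mul b))
      (fun x hx => by simp only [Pi.add_apply]; ring) measurableSet_Ioi
  refine Integrable.mono' (h1.norm.add h2) ?_ ?_
  · exact ((measurable_const.mul (by fun_prop)).mul
      (Real.measurable_log.comp (by fun_prop))).aestronglyMeasurable
  · rw [ae_restrict_iff' measurableSet_Ioi]
    refine ae_of_all _ (fun x hx => ?_)
    have hx0 : (0:ℝ) < x := hx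
    have hc : 0 < r * Real.exp (-(r * x)) := by positivity
    have key := abs_log_affine_le ha hb hx0
    simp only [Pi.add_apply, norm_mul, Real.norm_eq_abs]
    rw [abs_of_pos (Real.exp_pos _), abs_of_pos hr]
    nlinarith [Real.exp_pos (-(r*x)), abs_nonneg (Real.log b + Real.log x)]

lemma upper_pointwise {a b μ x : ℝ} (ha : 0 ≤ a) (hb : 0 < b) (hμ : 0 < μ) (hx : 0 < x) :
    Real.log (a + b * x) ≤ Real.log (a + b * μ) + (b * x - b * μ) / (a + b * μ) := by
  have hc : 0 < a + b * μ := by positivity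
  have hpos : 0 < a + b * x := by positivity
  have h := Real.log_le_sub_one_of_pos (show 0 < (a + b * x) / (a + b * μ) by positivity)
  rw [Real.log_div hpos.ne' hc.ne'] at h
  have h2 : (a + b * x) / (a + b * μ) - 1 = (b * x - b * μ) / (a + b * μ) := by
    field_simp
    ring
  linarith

lemma lower_pointwise {a b μ x : ℝ} (ha : 0 ≤ a) (hb : 0 < b) (hμ : 0 < μ) (hx : 0 < x) :
    Real.log (a + b * μ) + Real.log x - Real.log μ + a / (μ * (a + b * μ)) * (μ - x)
      ≤ Real.log (a + b * x) := by
  have hc : 0 < a + b * μ := by positivity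
  have hpos : 0 < a + b * x := by positivity
  have h := Real.log_le_sub_one_of_pos
    (show 0 < ((a + b * μ) * x) / ((a + b * x) * μ) by positivity)
  rw [Real.log_div (by positivity) (by positivity), Real.log_mul hc.ne' hx.ne',
    Real.log_mul hpos.ne' hμ.ne'] at h
  have key : (a + b * μ) * x / ((a + b * x) * μ) - 1 - a / (μ * (a + b * μ)) * (x - μ)
      = -(a * b * (x - μ) ^ 2 / ((a + b * x) * μ * (a + b * μ))) := by
    rw [← neg_div]
    field_simp
    ring
  have hkey : (a + b * μ) * x / ((a + b * x) * μ) - 1 ≤ a / (μ * (a + b * μ)) * (x - μ) := by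
    linarith [key, div_nonneg (by positivity : (0:ℝ) ≤ a * b * (x - μ) ^ 2)
      (by positivity : (0:ℝ) ≤ (a + b * x) * μ * (a + b * μ))]
  linarith

/-- For an exponentially distributed real random variable `ξ` with mean `μ > 0` and constants
`a ≥ 0`, `b > 0`, we have
`log₂(a + bμ) − γ·log₂ e ≤ E[log₂(a + bξ)] ≤ log₂(a + bμ)`,
where `γ` is the Euler–Mascheroni constant. -/
theorem exp_logb_expectation_bounds
    {Ω : Type*} [MeasureSpace Ω] {P : Measure Ω} [IsProbabilityMeasure P]
    (ξ : Ω → ℝ) (μ a b : ℝ) (hμ : 0 < μ) (ha : 0 ≤ a) (hb : 0 < b)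
    (hlaw : Measure.map ξ P = ProbabilityTheory.expMeasure (1 / μ)) :
    Real.logb 2 (a + b * μ) - Real.eulerMascheroniConstant * Real.logb 2 (Real.exp 1)
        ≤ ∫ ω, Real.logb 2 (a + b * ξ ω) ∂P ∧
      ∫ ω, Real.logb 2 (a + b * ξ ω) ∂P ≤ Real.logb 2 (a + b * μ) := by
  set r : ℝ := 1 / μ with hrdef
  have hr : 0 < r := by positivity
  haveI : IsProbabilityMeasure (expMeasure r) := isProbabilityMeasure_expMeasure hr
  have hξ : AEMeasurable ξ P := by
    by_contra h
    rw [Measure.map_of_not_aemeasurable h] at hlaw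
    exact (IsProbabilityMeasure.ne_zero (expMeasure r)) hlaw.symm
  have hc : 0 < a + b * μ := by positivity
  have hmap : ∫ ω, Real.log (a + b * ξ ω) ∂P = ∫ x, Real.log (a + b * x) ∂(expMeasure r) := by
    rw [← hlaw, integral_map hξ]
    exact (Real.measurable_log.comp (by fun_prop)).aestronglyMeasurable
  -- basic integrability and moments
  have hInt1 : Integrable (fun x : ℝ => x) (expMeasure r) := exp_integrable hr (Kr1 hr)
  have hMean : ∫ x, x ∂(expMeasure r) = μ := by
    rw [exp_integral_eq hr (fun x => x), Ir1 hr, hrdef, one_div_one_div]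
  have hIntlog : Integrable Real.log (expMeasure r) := exp_integrable hr (Kr2 hr)
  have hLog : ∫ x, Real.log x ∂(expMeasure r) = Real.log μ - Real.eulerMascheroniConstant := by
    rw [exp_integral_eq hr Real.log, Ir2 hr, hrdef, one_div, Real.log_inv]
    ring
  have hIntf : Integrable (fun x => Real.log (a + b * x)) (expMeasure r) :=
    exp_integrable hr (integrableOn_log_affine hr ha hb)
  have hae := exp_ae_Ioi hr
  -- upper bound for the natural-log integral
  have hIg1 : Integrable (fun x : ℝ => (b * x - b * μ) / (a + b * μ)) (expMeasure r) := by
    exact ((hInt1.const_mul b).sub (integrable_const (b * μ))).div_const _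
  have hIntU : Integrable (fun x : ℝ => Real.log (a + b * μ) + (b * x - b * μ) / (a + b * μ))
      (expMeasure r) := by
    exact (integrable_const _).add hIg1
  have hU : ∫ x, Real.log (a + b * x) ∂(expMeasure r) ≤ Real.log (a + b * μ) := by
    have h1 : ∫ x, Real.log (a + b * x) ∂(expMeasure r)
        ≤ ∫ x, (Real.log (a + b * μ) + (b * x - b * μ) / (a + b * μ)) ∂(expMeasure r) := by
      refine integral_mono_ae hIntf hIntU ?_
      filter_upwards [hae] with x hx
      exact upper_pointwise ha hb hμ hx
    have h2 : ∫ x, (Real.log (a + b * μ) + (b * x - b * μ) / (a + b * μ)) ∂(expMeasure r)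
        = Real.log (a + b * μ) := by
      rw [integral_add (integrable_const _) hIg1,
        integral_const, integral_div,
        integral_sub (hInt1.const_mul b) (integrable_const (b * μ)),
        integral_const_mul, hMean, integral_const]
      simp [measure_univ]
    linarith
  -- lower bound for the natural-log integral
  have hA1 : Integrable (fun x : ℝ => Real.log (a + b * μ) + Real.log x) (expMeasure r) := by
    exact (integrable_const _).add hIntlog
  have hA2 : Integrable (fun x : ℝ => Real.log (a + b * μ) + Real.log x - Real.log μ)
      (expMeasure r) := by
    exact hA1.sub (integrable_const _)
  have hB : Integrable (fun x : ℝ => a / (μ * (a + b * μ)) * (μ - x)) (expMeasure r) := by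
    exact ((integrable_const μ).sub hInt1).const_mul _
  have hIntL : Integrable (fun x : ℝ => Real.log (a + b * μ) + Real.log x - Real.log μ
      + a / (μ * (a + b * μ)) * (μ - x)) (expMeasure r) := by
    exact hA2.add hB
  have hL : Real.log (a + b * μ) - Real.eulerMascheroniConstant
      ≤ ∫ x, Real.log (a + b * x) ∂(expMeasure r) := by
    have h1 : ∫ x, (Real.log (a + b * μ) + Real.log x - Real.log μ
          + a / (μ * (a + b * μ)) * (μ - x)) ∂(expMeasure r)
        ≤ ∫ x, Real.log (a + b * x) ∂(expMeasure r) := by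
      refine integral_mono_ae hIntL hIntf ?_
      filter_upwards [hae] with x hx
      exact lower_pointwise ha hb hμ hx
    have h2 : ∫ x, (Real.log (a + b * μ) + Real.log x - Real.log μ
          + a / (μ * (a + b * μ)) * (μ - x)) ∂(expMeasure r)
        = Real.log (a + b * μ) - Real.eulerMascheroniConstant := by
      rw [integral_add hA2 hB,
        integral_sub hA1 (integrable_const _),
        integral_add (integrable_const _) hIntlog,
        integral_const_mul, integral_sub (integrable_const μ) hInt1,
        hMean, hLog, integral_const, integral_const]
      simp [measure_univ]
      ring
    linarith
  -- convert to logb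
  have hlogb : ∫ ω, Real.logb 2 (a + b * ξ ω) ∂P
      = (∫ ω, Real.log (a + b * ξ ω) ∂P) / Real.log 2 := by
    simp_rw [Real.logb, div_eq_mul_inv]
    rw [integral_mul_const]
  have hl2 : 0 < Real.log 2 := Real.log_pos (by norm_num)
  rw [hlogb, hmap]
  constructor
  · rw [Real.logb, Real.logb, Real.log_exp]
    have heq : Real.log (a + b * μ) / Real.log 2
        - Real.eulerMascheroniConstant * (1 / Real.log 2)
        = (Real.log (a + b * μ) - Real.eulerMascheroniConstant) / Real.log 2 := by ring
    rw [heq]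
    gcongr
  · rw [Real.logb]
    gcongr
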